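/- Let M be a finite monoid of linear endomorphisms of ℂ² generated by rank-1 idempotents. If p, q ∈ M are non-identity elements with im(p) ≠ ker(q), then Tr(pq) is either zero or a root of unity. -/
import Mathlib


/-- A projection on `ℂ²`: an idempotent linear endomorphism of rank 1. -/
def IsProj2 (p : Module.End ℂ (Fin 2 → ℂ)) : Prop :=
  p * p = p ∧ Module.finrank ℂ (LinearMap.range p) = 1

/-- Cayley–Hamilton for singular 2×2 matrices. -/
lemma mat_sq_eq (A : Matrix (Fin 2) (Fin 2) ℂ) (hd : A.det = 0) :
    A * A = A.trace • A := by
  rw [Matrix.det_fin_two] at hd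
  ext i j
  fin_cases i <;> fin_cases j <;>
    simp [Matrix.mul_apply, Matrix.trace_fin_two, Fin.sum_univ_two] <;>
    first
      | linear_combination -hd
      | ring

/-- Cayley–Hamilton for singular endomorphisms of `ℂ²`. -/
lemma end_sq_eq (x : Module.End ℂ (Fin 2 → ℂ)) (hd : LinearMap.det x = 0) :
    x * x = (LinearMap.trace ℂ (Fin 2 → ℂ) x) • x := by
  have hdA : (LinearMap.toMatrix' x).det = 0 := by
    rw [LinearMap.det_toMatrix']; exact hd
  have htr : LinearMap.trace ℂ (Fin 2 → ℂ) x = (LinearMap.toMatrix' x).trace := by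
    rw [LinearMap.trace_eq_matrix_trace ℂ (Pi.basisFun ℂ (Fin 2)) x,
      LinearMap.toMatrix_eq_toMatrix']
  apply LinearMap.toMatrix'.injective
  rw [LinearMap.toMatrix'_mul, map_smul, htr]
  exact mat_sq_eq _ hdA

lemma pow_succ_eq (x : Module.End ℂ (Fin 2 → ℂ)) (hd : LinearMap.det x = 0) (n : ℕ) :
    x ^ (n + 1) = (LinearMap.trace ℂ (Fin 2 → ℂ) x) ^ n • x := by
  induction n with
  | zero => simp
  | succ n ih =>
      rw [pow_succ, ih, smul_mul_assoc, end_sq_eq x hd, smul_smul, pow_succ]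

lemma det_of_mem {P : Set (Module.End ℂ (Fin 2 → ℂ))} (hP : ∀ p ∈ P, IsProj2 p)
    {x : Module.End ℂ (Fin 2 → ℂ)} (hx : x ∈ Submonoid.closure P) :
    x = 1 ∨ LinearMap.det x = 0 := by
  induction hx using Submonoid.closure_induction with
  | mem y hy =>
      right
      by_contra hdet
      -- then y is invertible and idempotent, hence y = 1, contradicting rank 1
      have hA : IsUnit (LinearMap.toMatrix' y).det := by
        rw [LinearMap.det_toMatrix']
        exact isUnit_iff_ne_zero.mpr hdet
      have hAu : IsUnit (LinearMap.toMatrix' y) :=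
        (Matrix.isUnit_iff_isUnit_det _).mpr hA
      obtain ⟨u, hu⟩ := hAu
      have hidem : LinearMap.toMatrix' y * LinearMap.toMatrix' y = LinearMap.toMatrix' y := by
        rw [← LinearMap.toMatrix'_mul, (hP y hy).1]
      have huu : u * u = u := by
        apply Units.ext
        rw [Units.val_mul, hu]
        exact hidem
      have hu1 : u = 1 := by
        have := huu
        nth_rewrite 3 [← mul_one u] at this
        exact mul_left_cancel this
      have hA1 : LinearMap.toMatrix' y = 1 := by
        rw [← hu, hu1, Units.val_one]
      have hy1 : y = 1 := by
        apply LinearMap.toMatrix'.injective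
        rw [hA1, LinearMap.toMatrix'_one]
      have hr := (hP y hy).2
      rw [hy1] at hr
      have : LinearMap.range (1 : Module.End ℂ (Fin 2 → ℂ)) = ⊤ := by
        ext v; simp [Module.End.one_eq_id]
      rw [this] at hr
      simp [finrank_top] at hr
  | one => left; rfl
  | mul a b _ _ iha ihb =>
      rcases iha with rfl | ha
      · rcases ihb with rfl | hb
        · left; rw [one_mul]
        · right; rw [one_mul]; exact hb
      · right
        rw [Module.End.mul_eq_comp, LinearMap.det_comp, ha, zero_mul]

/-- Let `M` be a finite monoid of endomorphisms of `ℂ²` generated by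
rank-1 idempotents.  If `p, q ∈ M` are non-identity elements with `im p ≠ ker q`, then
`Tr(pq)` is zero or a root of unity. -/
theorem stmt_12 (M : Submonoid (Module.End ℂ (Fin 2 → ℂ)))
    (hfin : (M : Set (Module.End ℂ (Fin 2 → ℂ))).Finite)
    (hgen : ∃ P : Set (Module.End ℂ (Fin 2 → ℂ)),
      (∀ p ∈ P, IsProj2 p) ∧ M = Submonoid.closure P)
    (p q : Module.End ℂ (Fin 2 → ℂ)) (hp : p ∈ M) (hq : q ∈ M)
    (hp1 : p ≠ 1) (hq1 : q ≠ 1)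
    (h : LinearMap.range p ≠ LinearMap.ker q) :
    LinearMap.trace ℂ (Fin 2 → ℂ) (p * q) = 0 ∨
    ∃ k : ℕ, 0 < k ∧ (LinearMap.trace ℂ (Fin 2 → ℂ) (p * q)) ^ k = 1 := by
  obtain ⟨P, hP, rfl⟩ := hgen
  have hdp : LinearMap.det p = 0 := (det_of_mem hP hp).resolve_left hp1
  have hdpq : LinearMap.det (p * q) = 0 := by
    rw [Module.End.mul_eq_comp, LinearMap.det_comp, hdp, zero_mul]
  set x := p * q with hx
  set t := LinearMap.trace ℂ (Fin 2 → ℂ) x with ht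
  by_cases ht0 : t = 0
  · exact Or.inl ht0
  right
  have hxM : x ∈ Submonoid.closure P := mul_mem hp hq
  have hnotinj : ¬ Function.Injective (fun n : ℕ => x ^ (n + 1)) := by
    intro hinj
    exact (Set.infinite_of_injective_forall_mem hinj
      (fun n => pow_mem hxM (n + 1))) hfin
  rw [Function.not_injective_iff] at hnotinj
  obtain ⟨a, b, hab, hne⟩ := hnotinj
  -- wlog a < b
  wlog hlt : a < b generalizing a b
  · exact this b a hab.symm hne.symm (by omega)
  have hpow : t ^ a • x = t ^ b • x := by
    rw [← pow_succ_eq x hdpq a, ← pow_succ_eq x hdpq b]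
    exact hab
  have hts : t ^ a = t ^ b := by
    have h2 := congrArg (LinearMap.trace ℂ (Fin 2 → ℂ)) hpow
    rw [map_smul, map_smul] at h2
    exact mul_right_cancel₀ ht0 (by simpa [← ht, smul_eq_mul] using h2)
  refine ⟨b - a, by omega, ?_⟩
  have hb : a + (b - a) = b := by omega
  have hcalc : t ^ a * t ^ (b - a) = t ^ a * 1 := by
    rw [← pow_add, hb, mul_one, hts]
  exact mul_left_cancel₀ (pow_ne_zero a ht0) hcalc
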